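/- Let p > 1, let N ≥ 2 be an integer, let α ∈ ℝ and let ω > α²/N². Define φ : [0,∞) → ℝ by φ(x) = (((p+1)ω/2)·sech²(((p−1)√ω/2)·x − arctanh(α/(N√ω))))^{1/(p−1)}. Then the Nehari identity holds: N·(∫₀^∞ φ'(x)² dx + ω·∫₀^∞ φ(x)² dx − ∫₀^∞ φ(x)^{p+1} dx) + α·φ(0)² = 0. -/

import Mathlib

open MeasureTheory Real Set Filter Topology

/-- Inverse hyperbolic tangent. -/
noncomputable def arctanh (x : ℝ) : ℝ := Real.log ((1 + x) / (1 - x)) / 2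

lemma sinh_div_cosh_arctanh {t : ℝ} (h : |t| < 1) :
    Real.sinh (arctanh t) / Real.cosh (arctanh t) = t := by
  obtain ⟨h1, h2⟩ := abs_lt.mp h
  have hr : 0 < (1 + t) / (1 - t) := div_pos (by linarith) (by linarith)
  set E := Real.exp (Real.log ((1 + t) / (1 - t)) / 2) with hE
  have hE0 : 0 < E := Real.exp_pos _
  have hE2 : E * E = (1 + t) / (1 - t) := by
    rw [hE, ← Real.exp_add]
    rw [show Real.log ((1 + t) / (1 - t)) / 2 + Real.log ((1 + t) / (1 - t)) / 2
        = Real.log ((1 + t) / (1 - t)) by ring]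
    exact Real.exp_log hr
  rw [arctanh, Real.sinh_eq, Real.cosh_eq, Real.exp_neg, ← hE]
  have h1t : (1 : ℝ) - t ≠ 0 := by linarith
  have hEE : E * E * (1 - t) = 1 + t := by rw [hE2]; field_simp
  have hden : E + E⁻¹ ≠ 0 := by positivity
  field_simp
  nlinarith [hE0]

set_option maxHeartbeats 2000000 in
/-- The ground-state profile of the NLS-δ equation on a star graph with `N` edges lies
on the Nehari manifold: `N·(∫φ'² + ω∫φ² − ∫φ^{p+1}) + α·φ(0)² = 0`. -/
theorem ground_state_nehari_identity (p : ℝ) (hp : 1 < p) (N : ℕ) (hN : 2 ≤ N)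
    (α ω : ℝ) (hω : α ^ 2 / (N : ℝ) ^ 2 < ω)
    (φ : ℝ → ℝ)
    (hφ : φ = fun x : ℝ => ((p + 1) * ω / 2 *
      (1 / Real.cosh ((p - 1) * Real.sqrt ω / 2 * x
        - arctanh (α / ((N : ℝ) * Real.sqrt ω)))) ^ 2) ^ (1 / (p - 1))) :
    (N : ℝ) * ((∫ x in Set.Ioi (0 : ℝ), (deriv φ x) ^ 2)
        + ω * (∫ x in Set.Ioi (0 : ℝ), (φ x) ^ 2)
        - (∫ x in Set.Ioi (0 : ℝ), φ x ^ (p + 1)))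
      + α * (φ 0) ^ 2 = 0 := by
  have hN0 : (0:ℝ) < (N:ℝ) := by
    have : 0 < N := by omega
    exact_mod_cast this
  have hω0 : 0 < ω := lt_of_le_of_lt (by positivity) hω
  set sq := Real.sqrt ω with hsqdef
  have hsq0 : 0 < sq := Real.sqrt_pos.mpr hω0
  have hsq2 : sq * sq = ω := Real.mul_self_sqrt hω0.le
  have hp1 : (0:ℝ) < p - 1 := by linarith
  set a := (p - 1) * sq / 2 with ha
  have ha0 : 0 < a := by positivity
  set t := α / ((N:ℝ) * sq) with ht
  have htabs : |t| < 1 := by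
    rw [ht, abs_div, abs_of_pos (mul_pos hN0 hsq0), div_lt_one (mul_pos hN0 hsq0)]
    by_contra hcon
    push_neg at hcon
    have h2 : α ^ 2 < ω * (N:ℝ)^2 := by rwa [div_lt_iff₀ (by positivity)] at hω
    nlinarith [sq_abs α, abs_nonneg α,
      mul_le_mul hcon hcon (mul_pos hN0 hsq0).le (abs_nonneg α)]
  set b := arctanh t with hb
  set β := (p + 1) * ω / 2 with hβ
  have hβ0 : 0 < β := by rw [hβ]; nlinarith
  set q := 1 / (p - 1) with hq
  have hq0 : 0 < q := by positivity
  set g : ℝ → ℝ := fun x => β * ((Real.cosh (a * x - b))⁻¹) ^ 2 with hg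
  have hcpos : ∀ y : ℝ, 0 < Real.cosh (a * y - b) := fun y => Real.cosh_pos _
  have hgpos : ∀ y, 0 < g y := by
    intro y; rw [hg]; have := hcpos y; positivity
  have hφg : φ = fun x => g x ^ q := by
    rw [hφ, hg, hq]
    funext x
    rw [one_div (Real.cosh _)]
  have hφx : ∀ x, φ x = g x ^ q := fun x => by rw [hφg]
  have hφpos : ∀ x, 0 < φ x := by
    intro x; rw [hφx x]; exact Real.rpow_pos_of_pos (hgpos x) _
  -- the derivative
  set D : ℝ → ℝ := fun y =>
    -(sq * (Real.sinh (a * y - b) / Real.cosh (a * y - b) * φ y)) with hD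
  have hsqa : 2 * a = (p - 1) * sq := by rw [ha]; ring
  have hDer : ∀ x, HasDerivAt φ (D x) x := by
    intro x
    have h1 : HasDerivAt (fun y : ℝ => a * y - b) a x := by
      simpa using ((hasDerivAt_id x).const_mul a).sub_const b
    have h2 : HasDerivAt (fun y => Real.cosh (a * y - b)) (Real.sinh (a * x - b) * a) x :=
      (Real.hasDerivAt_cosh _).comp x h1
    have h3 := h2.inv (hcpos x).ne'
    have h4 := h3.pow 2
    have h5 := h4.const_mul β
    have h5' : HasDerivAt g (β * (2 * ((Real.cosh (a * x - b))⁻¹) ^ 1 *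
        (-(Real.sinh (a * x - b) * a) / Real.cosh (a * x - b) ^ 2))) x := by
      rw [hg]; exact h5.congr_deriv (by simp)
    have h6 := h5'.rpow_const (p := q) (Or.inl (hgpos x).ne')
    rw [← hφg] at h6
    convert h6 using 1
    rw [Real.rpow_sub_one (hgpos x).ne']
    have hc := hcpos x
    rw [← hφx x]
    have hgx : g x = β * ((Real.cosh (a * x - b))⁻¹) ^ 2 := by rw [hg]
    rw [hgx, hq, hD]
    field_simp
    linear_combination (-(Real.sinh (a*x-b) * φ x * Real.cosh (a*x-b)^3 * β)) * hsqa
  have hDval : ∀ x, D x = -(sq * (Real.sinh (a * x - b) / Real.cosh (a * x - b) * φ x)) :=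
    fun x => by rw [hD]
  have hφcont : Continuous φ :=
    continuous_iff_continuousAt.mpr fun x => (hDer x).differentiableAt.continuousAt
  have hlin : Continuous fun y : ℝ => a * y - b := by fun_prop
  have hDcont : Continuous D := by
    rw [hD]
    exact (continuous_const.mul (((Real.continuous_sinh.comp hlin).div
      (Real.continuous_cosh.comp hlin) (fun y => (hcpos y).ne')).mul hφcont)).neg
  -- power identity
  have hpow : ∀ x, φ x ^ (p + 1) = g x * φ x ^ 2 := by
    intro x
    have h1 : φ x ^ (p + 1) = g x ^ (q * (p + 1)) := by
      rw [hφx x, ← Real.rpow_mul (hgpos x).le]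
    have h2 : q * (p + 1) = q * 2 + 1 := by rw [hq]; field_simp; ring
    have h3 : g x ^ (q * 2 + 1) = (g x ^ q) ^ (2:ℕ) * g x := by
      rw [Real.rpow_add (hgpos x), Real.rpow_one, Real.rpow_mul (hgpos x).le,
        show ((2:ℝ) = ((2:ℕ):ℝ)) by norm_num, Real.rpow_natCast]
    rw [h1, h2, h3, ← hφx x]
    ring
  -- F and its derivative
  set F : ℝ → ℝ := fun x => φ x * D x with hF
  have hFder : ∀ x, HasDerivAt F (D x ^ 2 + ω * φ x ^ 2 - φ x ^ (p + 1)) x := by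
    intro x
    have h1 : HasDerivAt (fun y : ℝ => a * y - b) a x := by
      simpa using ((hasDerivAt_id x).const_mul a).sub_const b
    have hsnh : HasDerivAt (fun y => Real.sinh (a * y - b)) (Real.cosh (a * x - b) * a) x :=
      (Real.hasDerivAt_sinh _).comp x h1
    have hcsh : HasDerivAt (fun y => Real.cosh (a * y - b)) (Real.sinh (a * x - b) * a) x :=
      (Real.hasDerivAt_cosh _).comp x h1
    have hT := hsnh.div hcsh (hcpos x).ne'
    have hD2 := ((hT.mul (hDer x)).const_mul sq).neg
    have hD2' : HasDerivAt D (-(sq * ((Real.cosh (a * x - b) * a * Real.cosh (a * x - b) -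
        Real.sinh (a * x - b) * (Real.sinh (a * x - b) * a)) / Real.cosh (a * x - b) ^ 2 * φ x
        + Real.sinh (a * x - b) / Real.cosh (a * x - b) * D x))) x := by
      rw [hD]; exact hD2
    have hkey : D x ^ 2 + ω * φ x ^ 2 - φ x ^ (p + 1)
        = D x * D x + φ x * -(sq * ((Real.cosh (a * x - b) * a * Real.cosh (a * x - b) -
        Real.sinh (a * x - b) * (Real.sinh (a * x - b) * a)) / Real.cosh (a * x - b) ^ 2 * φ x
        + Real.sinh (a * x - b) / Real.cosh (a * x - b) * D x)) := by
      have hc := hcpos x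
      have hone := Real.cosh_sq_sub_sinh_sq (a * x - b)
      have hgx : g x = β * ((Real.cosh (a * x - b))⁻¹) ^ 2 := by rw [hg]
      rw [hpow x, hDval x, hgx]
      have hCC : Real.cosh (a * x - b) * (Real.cosh (a * x - b))⁻¹ = 1 :=
        mul_inv_cancel₀ hc.ne'
      linear_combination (φ x ^ 2 / Real.cosh (a * x - b) ^ 2) *
        ((ω + sq * a) * hone + (sq / 2) * hsqa
          + ((p - 1) / 2 - Real.sinh (a * x - b) ^ 2) * hsq2 - hβ)
        + (-(φ x ^ 2 * ω * (Real.cosh (a * x - b) * (Real.cosh (a * x - b))⁻¹ + 1))) * hCC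
    rw [hF, hkey]
    exact (hDer x).mul hD2'
  -- exponential bound
  set K := (β * 4 * Real.exp (2 * b)) ^ q with hK
  have hK0 : 0 < K := by
    rw [hK]; apply Real.rpow_pos_of_pos; positivity
  have h2aq : 2 * a * q = sq := by
    rw [ha, hq]; field_simp
  have hφle : ∀ x, φ x ≤ K * Real.exp (-sq * x) := by
    intro x
    have hc := hcpos x
    have hexp0 := Real.exp_pos (a * x - b)
    have h1 : Real.exp (a * x - b) / 2 ≤ Real.cosh (a * x - b) := by
      rw [Real.cosh_eq]; nlinarith [Real.exp_pos (-(a * x - b))]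
    have hinv : (Real.cosh (a * x - b))⁻¹ ≤ 2 * Real.exp (-(a * x - b)) := by
      calc (Real.cosh (a * x - b))⁻¹ ≤ (Real.exp (a * x - b) / 2)⁻¹ := by
            apply inv_anti₀ (by positivity) h1
        _ = 2 * (Real.exp (a * x - b))⁻¹ := by field_simp
        _ = 2 * Real.exp (-(a * x - b)) := by rw [Real.exp_neg]
    have hgle : g x ≤ β * 4 * Real.exp (2 * b) * Real.exp (-(2 * a) * x) := by
      rw [hg]
      have h4 : ((Real.cosh (a * x - b))⁻¹) ^ 2 ≤ (2 * Real.exp (-(a * x - b))) ^ 2 := by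
        apply pow_le_pow_left₀ (by positivity) hinv
      calc β * ((Real.cosh (a * x - b))⁻¹) ^ 2 ≤ β * (2 * Real.exp (-(a * x - b))) ^ 2 := by
            apply mul_le_mul_of_nonneg_left h4 hβ0.le
        _ = β * 4 * Real.exp (-(a * x - b) + -(a * x - b)) := by
            rw [Real.exp_add]; ring
        _ = β * 4 * Real.exp (2 * b + -(2 * a) * x) := by congr 1; ring
        _ = β * 4 * Real.exp (2 * b) * Real.exp (-(2 * a) * x) := by
            rw [Real.exp_add]; ring
    calc φ x = g x ^ q := hφx x
      _ ≤ (β * 4 * Real.exp (2 * b) * Real.exp (-(2 * a) * x)) ^ q := by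
          apply Real.rpow_le_rpow (hgpos x).le hgle hq0.le
      _ = K * Real.exp (-sq * x) := by
          rw [Real.mul_rpow (by positivity) (Real.exp_pos _).le, ← hK,
            ← Real.exp_mul]
          congr 1
          rw [← h2aq]; ring
  have hφ2le : ∀ x, φ x ^ 2 ≤ K ^ 2 * Real.exp (-(2 * sq) * x) := by
    intro x
    have := pow_le_pow_left₀ (hφpos x).le (hφle x) 2
    calc φ x ^ 2 ≤ (K * Real.exp (-sq * x)) ^ 2 := this
      _ = K ^ 2 * (Real.exp (-sq * x) * Real.exp (-sq * x)) := by
          rw [mul_pow]; ring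
      _ = K ^ 2 * Real.exp (-sq * x + -sq * x) := by rw [Real.exp_add]
      _ = K ^ 2 * Real.exp (-(2 * sq) * x) := by congr 1; ring
  -- integrability
  have hexpInt : IntegrableOn (fun x => K ^ 2 * Real.exp (-(2 * sq) * x)) (Ioi (0:ℝ)) :=
    (exp_neg_integrableOn_Ioi 0 (by positivity : (0:ℝ) < 2 * sq)).const_mul _
  have hSC2 : ∀ x, (Real.sinh (a * x - b) / Real.cosh (a * x - b)) ^ 2 ≤ 1 := by
    intro x
    rw [div_pow, div_le_one (by positivity)]
    nlinarith [Real.cosh_sq_sub_sinh_sq (a * x - b)]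
  have hint2 : IntegrableOn (fun x => φ x ^ 2) (Ioi (0:ℝ)) := by
    refine Integrable.mono hexpInt ((hφcont.pow 2).aestronglyMeasurable) (ae_of_all _ fun x => ?_)
    rw [Real.norm_eq_abs, Real.norm_eq_abs, abs_of_nonneg (by positivity),
      abs_of_nonneg (by positivity)]
    exact hφ2le x
  have hint1 : IntegrableOn (fun x => D x ^ 2) (Ioi (0:ℝ)) := by
    refine Integrable.mono (hint2.const_mul ω) ((hDcont.pow 2).aestronglyMeasurable)
      (ae_of_all _ fun x => ?_)
    rw [Real.norm_eq_abs, Real.norm_eq_abs, abs_of_nonneg (by positivity),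
      abs_of_nonneg (by positivity : (0:ℝ) ≤ ω * φ x ^ 2)]
    rw [hDval x]
    calc (-(sq * (Real.sinh (a * x - b) / Real.cosh (a * x - b) * φ x))) ^ 2
        = (sq * sq) * ((Real.sinh (a * x - b) / Real.cosh (a * x - b)) ^ 2 * φ x ^ 2) := by ring
      _ ≤ ω * (1 * φ x ^ 2) := by
          rw [hsq2]
          apply mul_le_mul_of_nonneg_left _ hω0.le
          apply mul_le_mul_of_nonneg_right (hSC2 x) (by positivity)
      _ = ω * φ x ^ 2 := by ring
  have hint3 : IntegrableOn (fun x => φ x ^ (p + 1)) (Ioi (0:ℝ)) := by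
    have hcont3 : Continuous fun x => φ x ^ (p + 1) := by
      have : (fun x => φ x ^ (p + 1)) = fun x => g x * φ x ^ 2 := funext fun x => hpow x
      rw [this, hg]
      exact (continuous_const.mul (((Real.continuous_cosh.comp hlin).inv₀
        (fun y => (hcpos y).ne')).pow 2)).mul (hφcont.pow 2)
    refine Integrable.mono (hint2.const_mul β) hcont3.aestronglyMeasurable
      (ae_of_all _ fun x => ?_)
    rw [Real.norm_eq_abs, Real.norm_eq_abs,
      abs_of_nonneg (Real.rpow_nonneg (hφpos x).le _),
      abs_of_nonneg (by positivity : (0:ℝ) ≤ β * φ x ^ 2), hpow x, hg]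
    have hc1 : 1 ≤ Real.cosh (a * x - b) := Real.one_le_cosh _
    have : ((Real.cosh (a * x - b))⁻¹) ^ 2 ≤ 1 := by
      rw [← one_pow 2]
      apply pow_le_pow_left₀ (by positivity)
      rw [inv_le_one_iff₀]; right; exact hc1
    calc β * ((Real.cosh (a * x - b))⁻¹) ^ 2 * φ x ^ 2
        ≤ β * 1 * φ x ^ 2 := by
          apply mul_le_mul_of_nonneg_right _ (by positivity)
          exact mul_le_mul_of_nonneg_left this hβ0.le
      _ = β * φ x ^ 2 := by ring
  have hintω : IntegrableOn (fun x => ω * φ x ^ 2) (Ioi (0:ℝ)) := hint2.const_mul ω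
  have hintsum : IntegrableOn (fun x => D x ^ 2 + ω * φ x ^ 2) (Ioi (0:ℝ)) :=
    hint1.add hintω
  have hEint : IntegrableOn (fun x => D x ^ 2 + ω * φ x ^ 2 - φ x ^ (p + 1)) (Ioi (0:ℝ)) :=
    hintsum.sub hint3
  -- limit of F at infinity
  have htendexp : Tendsto (fun x : ℝ => Real.exp (-(2 * sq) * x)) atTop (𝓝 0) := by
    have h1 : Tendsto (fun x : ℝ => -(2 * sq) * x) atTop atBot :=
      tendsto_id.const_mul_atTop_of_neg (by linarith : -(2 * sq) < 0)
    exact Real.tendsto_exp_atBot.comp h1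
  have htendF : Tendsto F atTop (𝓝 0) := by
    apply squeeze_zero_norm (a := fun x => sq * (K ^ 2 * Real.exp (-(2 * sq) * x)))
    · intro x
      rw [hF, Real.norm_eq_abs, abs_mul, hDval x, abs_neg, abs_mul, abs_mul,
        abs_of_pos hsq0, abs_of_pos (hφpos x)]
      have hSC1 : |Real.sinh (a * x - b) / Real.cosh (a * x - b)| ≤ 1 := by
        rw [abs_le]
        constructor <;> nlinarith [hSC2 x, sq_abs (Real.sinh (a * x - b) / Real.cosh (a * x - b)),
          abs_nonneg (Real.sinh (a * x - b) / Real.cosh (a * x - b))]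
      calc φ x * (sq * (|Real.sinh (a * x - b) / Real.cosh (a * x - b)| * φ x))
          ≤ φ x * (sq * (1 * φ x)) := by
            apply mul_le_mul_of_nonneg_left _ (hφpos x).le
            apply mul_le_mul_of_nonneg_left _ hsq0.le
            apply mul_le_mul_of_nonneg_right hSC1 (hφpos x).le
        _ = sq * φ x ^ 2 := by ring
        _ ≤ sq * (K ^ 2 * Real.exp (-(2 * sq) * x)) :=
            mul_le_mul_of_nonneg_left (hφ2le x) hsq0.le
    · have := (htendexp.const_mul (K ^ 2)).const_mul sq
      simpa using this
  -- FTC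
  have key : (∫ x in Set.Ioi (0:ℝ), (D x ^ 2 + ω * φ x ^ 2 - φ x ^ (p + 1)))
      = 0 - F 0 :=
    integral_Ioi_of_hasDerivAt_of_tendsto' (fun x _ => hFder x) hEint htendF
  rw [integral_sub hintsum hint3, integral_add hint1 hintω, integral_const_mul] at key
  -- value at 0
  have hF0 : F 0 = sq * t * φ 0 ^ 2 := by
    have h0 : F 0 = φ 0 * D 0 := by rw [hF]
    rw [h0, hDval 0, show a * 0 - b = -b by ring, Real.sinh_neg, Real.cosh_neg, hb,
      neg_div, sinh_div_cosh_arctanh htabs]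
    ring
  have hst : sq * t = α / N := by
    rw [ht]; field_simp
  -- conclusion
  have hderiv_eq : deriv φ = D := funext fun x => (hDer x).deriv
  rw [hderiv_eq]
  rw [show (∫ x in Set.Ioi (0:ℝ), D x ^ 2) + ω * (∫ x in Set.Ioi (0:ℝ), φ x ^ 2)
      - (∫ x in Set.Ioi (0:ℝ), φ x ^ (p + 1)) = 0 - F 0 from key, hF0, hst]
  field_simp
  ring
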